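/- Let (M_i, ℬ_i, μ_i), i ∈ I, be measure spaces with μ_i(M_i) ≤ 1, let 𝒟 be an ultrafilter on I, let M = ∏_𝒟 M_i be the set-theoretic ultraproduct, and let μ be the Carathéodory extension to the σ-algebra generated by the ultraboxes of the premeasure defined on ultraboxes by μ([A_i]) = lim_𝒟 μ_i(A_i). For each i let f_i : M_i → ℝ be measurable with |f_i| ≤ β for a fixed β ≥ 0. Then the function f : M → ℝ given by f([a_i]) = lim_𝒟 f_i(a_i) is well defined and measurable with respect to the σ-algebra generated by the ultraboxes, and ∫_M f dμ = lim_𝒟 ∫_{M_i} f_i dμ_i. -/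

import Mathlib

open MeasureTheory Filter Set
open scoped ENNReal Topology

/-- The equivalence relation of the set-theoretic ultraproduct: two families are identified
when they agree on a set in the ultrafilter `𝒟`. -/
def ultraSetoid {I : Type*} (𝒟 : Ultrafilter I) (M : I → Type*) : Setoid (∀ i, M i) where
  r x y := {i | x i = y i} ∈ 𝒟
  iseqv := by
    refine ⟨fun x => ?_, fun {x y} h => ?_, fun {x y z} hxy hyz => ?_⟩
    · exact Filter.mem_of_superset Filter.univ_mem fun i _ => rfl
    · exact Filter.mem_of_superset h fun i hi => (hi : _ = _).symm
    · exact Filter.mem_of_superset (Filter.inter_mem hxy hyz)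
        fun i hi => (hi.1 : _ = _).trans hi.2

/-- The set-theoretic ultraproduct `∏_𝒟 M_i`: the quotient of `∏_i M_i` by the relation
`(x_i) ∼ (y_i)` iff `{i : x_i = y_i} ∈ 𝒟`. -/
def UProd {I : Type*} (𝒟 : Ultrafilter I) (M : I → Type*) : Type _ :=
  Quotient (ultraSetoid 𝒟 M)

/-- The ultrabox `[A_i] = {[a_i] : {i : a_i ∈ A_i} ∈ 𝒟}` determined by a family of sets
`A_i ⊆ M_i`. -/
def ultrabox {I : Type*} (𝒟 : Ultrafilter I) (M : I → Type*) (A : ∀ i, Set (M i)) :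
    Set (UProd 𝒟 M) :=
  Quotient.mk (ultraSetoid 𝒟 M) '' {a | {i | a i ∈ A i} ∈ 𝒟}

/-- The collection of ultraboxes of families of measurable sets. -/
def ultraboxes {I : Type*} (𝒟 : Ultrafilter I) (M : I → Type*)
    [∀ i, MeasurableSpace (M i)] : Set (Set (UProd 𝒟 M)) :=
  {S | ∃ A : ∀ i, Set (M i), (∀ i, MeasurableSet (A i)) ∧ S = ultrabox 𝒟 M A}

section Helpers

variable {I : Type*} {𝒟 : Ultrafilter I} {M : I → Type*}

theorem mem_ultrabox {A : ∀ i, Set (M i)} (a : ∀ i, M i) :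
    Quotient.mk (ultraSetoid 𝒟 M) a ∈ ultrabox 𝒟 M A ↔ {i | a i ∈ A i} ∈ 𝒟 := by
  constructor
  · rintro ⟨b, hb, hba⟩
    have h : {i | b i = a i} ∈ 𝒟 := Quotient.exact hba
    exact Filter.mem_of_superset (Filter.inter_mem h hb) fun i hi => by
      have h1 : b i = a i := hi.1
      have h2 : b i ∈ A i := hi.2
      show a i ∈ A i
      exact h1 ▸ h2
  · intro h
    exact ⟨a, h, rfl⟩

theorem ultrabox_mono {A B : ∀ i, Set (M i)} (h : ∀ i, A i ⊆ B i) :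
    ultrabox 𝒟 M A ⊆ ultrabox 𝒟 M B := by
  rintro _ ⟨a, ha, rfl⟩
  exact ⟨a, Filter.mem_of_superset ha fun i hi => h i hi, rfl⟩

theorem exists_ultra_lim_real (𝒟 : Ultrafilter I) {β : ℝ} (h : I → ℝ)
    (hb : ∀ i, h i ∈ Set.Icc (-β) β) :
    ∃ x ∈ Set.Icc (-β) β, Tendsto h (𝒟 : Filter I) (𝓝 x) := by
  have hle : ↑(𝒟.map h) ≤ 𝓟 (Set.Icc (-β) β) := by
    rw [Ultrafilter.coe_map, Filter.le_principal_iff]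
    exact Filter.mem_map.2 (Filter.univ_mem' hb)
  obtain ⟨x, hx, hle'⟩ := isCompact_Icc.ultrafilter_le_nhds (𝒟.map h) hle
  exact ⟨x, hx, by rwa [Ultrafilter.coe_map] at hle'⟩

theorem exists_ultra_lim_ennreal (𝒟 : Ultrafilter I) (h : I → ℝ≥0∞) :
    ∃ x, Tendsto h (𝒟 : Filter I) (𝓝 x) :=
  ⟨(𝒟.map h).lim, by
    have := (𝒟.map h).le_nhds_lim
    rwa [Ultrafilter.coe_map] at this⟩

end Helpers

/-- Lemma 3.6: let `(M_i, ℬ_i, μ_i)` be measure spaces with `μ_i(M_i) ≤ 1`, `𝒟` an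
ultrafilter on `I`, and let `ν` be the (Carathéodory) extension, to the σ-algebra generated
by the ultraboxes of `M = ∏_𝒟 M_i`, of the premeasure `[A_i] ↦ lim_𝒟 μ_i(A_i)`.
If `f_i : M_i → ℝ` are measurable with `|f_i| ≤ β`, then `f([a_i]) = lim_𝒟 f_i(a_i)` is a
well-defined function on `M` (i.e. there is a function `g` on `M` whose value at the class
of any representative `a` is the `𝒟`-limit of `i ↦ f_i (a_i)`), `g` is measurable for the
σ-algebra generated by the ultraboxes, and `∫_M g dν = lim_𝒟 ∫_{M_i} f_i dμ_i`. -/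
theorem ultraproduct_integral_limit
    {I : Type*} (𝒟 : Ultrafilter I) (M : I → Type*) [∀ i, Nonempty (M i)]
    [∀ i, MeasurableSpace (M i)] (μ : ∀ i, Measure (M i))
    (hμ : ∀ i, μ i Set.univ ≤ 1)
    (ν : @Measure (UProd 𝒟 M) (MeasurableSpace.generateFrom (ultraboxes 𝒟 M)))
    (hν : ∀ A : ∀ i, Set (M i), (∀ i, MeasurableSet (A i)) →
      ν (ultrabox 𝒟 M A) = limUnder (𝒟 : Filter I) fun i => μ i (A i))
    (β : ℝ) (hβ : 0 ≤ β)
    (f : ∀ i, M i → ℝ) (hf : ∀ i, Measurable (f i)) (hbd : ∀ i x, |f i x| ≤ β) :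
    ∃ g : UProd 𝒟 M → ℝ,
      -- `g` is well defined: its value on any class is the `𝒟`-limit over representatives
      (∀ a : ∀ i, M i,
        Tendsto (fun i => f i (a i)) (𝒟 : Filter I)
          (𝓝 (g (Quotient.mk (ultraSetoid 𝒟 M) a)))) ∧
      -- `g` is measurable with respect to the σ-algebra generated by the ultraboxes
      Measurable[MeasurableSpace.generateFrom (ultraboxes 𝒟 M)] g ∧
      -- `∫_M g dν = lim_𝒟 ∫_{M_i} f_i dμ_i`
      Tendsto (fun i => ∫ x, f i x ∂(μ i)) (𝒟 : Filter I) (𝓝 (∫ x, g x ∂ν)) := by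
  classical
  letI 𝔪 : MeasurableSpace (UProd 𝒟 M) := MeasurableSpace.generateFrom (ultraboxes 𝒟 M)
  haveI finμ : ∀ i, IsFiniteMeasure (μ i) := fun i => ⟨lt_of_le_of_lt (hμ i) ENNReal.one_lt_top⟩
  have hbd' : ∀ (a : ∀ i, M i) (i : I), f i (a i) ∈ Set.Icc (-β) β := fun a i => by
    have := abs_le.1 (hbd i (a i)); exact ⟨this.1, this.2⟩
  -- the function on representatives
  set G : (∀ i, M i) → ℝ := fun a => limUnder (𝒟 : Filter I) fun i => f i (a i) with hGdef
  have hG : ∀ a, Tendsto (fun i => f i (a i)) (𝒟 : Filter I) (𝓝 (G a)) := by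
    intro a
    obtain ⟨x, _, hx⟩ := exists_ultra_lim_real 𝒟 _ (hbd' a)
    have : G a = x := hx.limUnder_eq
    rwa [this]
  have hGrange : ∀ a, G a ∈ Set.Icc (-β) β := fun a =>
    isClosed_Icc.mem_of_tendsto (hG a) (Filter.Eventually.of_forall (hbd' a))
  have hGcong : ∀ a b : ∀ i, M i, (ultraSetoid 𝒟 M).r a b → G a = G b := by
    intro a b hab
    have hev : (fun i => f i (a i)) =ᶠ[(𝒟 : Filter I)] fun i => f i (b i) :=
      Filter.mem_of_superset (hab : {i | a i = b i} ∈ 𝒟) fun i hi => by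
        show f i (a i) = f i (b i); rw [(hi : a i = b i)]
    exact (((hG a).congr' hev).limUnder_eq).symm
  set g : UProd 𝒟 M → ℝ := Quotient.lift G hGcong with hgdef
  have htend : ∀ a : ∀ i, M i,
      Tendsto (fun i => f i (a i)) (𝒟 : Filter I) (𝓝 (g (Quotient.mk (ultraSetoid 𝒟 M) a))) :=
    fun a => hG a
  have hgrange : ∀ m, g m ∈ Set.Icc (-β) β := by
    intro m; obtain ⟨a, rfl⟩ := Quotient.exists_rep m; exact hGrange a
  -- inclusions between preimages and ultraboxes
  have hsub1 : ∀ s : Set ℝ, IsOpen s → g ⁻¹' s ⊆ ultrabox 𝒟 M fun i => f i ⁻¹' s := by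
    intro s hs m hm
    obtain ⟨a, rfl⟩ := Quotient.exists_rep m
    refine (mem_ultrabox a).2 ?_
    exact (htend a).eventually_mem (hs.mem_nhds hm)
  have hsub2 : ∀ s : Set ℝ, IsClosed s → (ultrabox 𝒟 M fun i => f i ⁻¹' s) ⊆ g ⁻¹' s := by
    intro s hs m hm
    obtain ⟨a, rfl⟩ := Quotient.exists_rep m
    have hmem : {i | a i ∈ f i ⁻¹' s} ∈ 𝒟 := (mem_ultrabox a).1 hm
    exact hs.mem_of_tendsto (htend a) hmem
  -- measurability of g
  have hmeas : Measurable[𝔪] g := by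
    apply measurable_of_Ioi
    intro c
    have hset : g ⁻¹' Set.Ioi c =
        ⋃ q : {q : ℚ // c < (q : ℝ)}, ultrabox 𝒟 M fun i => f i ⁻¹' Set.Ioi ((q : ℚ) : ℝ) := by
      ext m
      simp only [Set.mem_preimage, Set.mem_Ioi, Set.mem_iUnion]
      obtain ⟨a, rfl⟩ := Quotient.exists_rep m
      constructor
      · intro hc
        obtain ⟨q, hq1, hq2⟩ := exists_rat_btwn hc
        refine ⟨⟨q, hq1⟩, (mem_ultrabox a).2 ?_⟩
        exact (htend a).eventually (eventually_gt_nhds hq2)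
      · rintro ⟨⟨q, hq⟩, hmem⟩
        have h1 : {i | a i ∈ f i ⁻¹' Set.Ioi ((q : ℚ) : ℝ)} ∈ 𝒟 := (mem_ultrabox a).1 hmem
        have h2 : ((q : ℚ) : ℝ) ≤ g (Quotient.mk (ultraSetoid 𝒟 M) a) :=
          ge_of_tendsto (htend a) (Filter.mem_of_superset h1 fun i hi => show ((q : ℚ) : ℝ) ≤ f i (a i) from le_of_lt hi)
        exact lt_of_lt_of_le hq h2
    rw [hset]
    exact MeasurableSet.iUnion fun q =>
      MeasurableSpace.measurableSet_generateFrom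
        ⟨_, fun i => (hf i) measurableSet_Ioi, rfl⟩
  -- ν is a (sub-)probability measure
  have hνuniv : ν Set.univ ≤ 1 := by
    have huniv : (Set.univ : Set (UProd 𝒟 M)) = ultrabox 𝒟 M fun _ => Set.univ := by
      ext m
      simp only [Set.mem_univ, true_iff]
      obtain ⟨a, rfl⟩ := Quotient.exists_rep m
      exact (mem_ultrabox a).2 (Filter.univ_mem' fun i => Set.mem_univ _)
    rw [huniv, hν _ fun i => MeasurableSet.univ]
    obtain ⟨x, hx⟩ := exists_ultra_lim_ennreal 𝒟 fun i => μ i Set.univ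
    rw [hx.limUnder_eq]
    exact le_of_tendsto hx (Filter.Eventually.of_forall hμ)
  haveI finν : IsFiniteMeasure ν := ⟨lt_of_le_of_lt hνuniv ENNReal.one_lt_top⟩
  -- key convergence for cells with null boundary
  have key : ∀ a b : ℝ, ν (g ⁻¹' {a}) = 0 → ν (g ⁻¹' {b}) = 0 →
      Tendsto (fun i => (μ i (f i ⁻¹' Set.Ico a b)).toReal) (𝒟 : Filter I)
        (𝓝 ((ν (g ⁻¹' Set.Ico a b)).toReal)) := by
    intro a b ha hb
    obtain ⟨x, hx⟩ := exists_ultra_lim_ennreal 𝒟 fun i => μ i (f i ⁻¹' Set.Ico a b)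
    have hxval : ν (ultrabox 𝒟 M fun i => f i ⁻¹' Set.Ico a b) = x := by
      rw [hν _ fun i => (hf i) measurableSet_Ico]
      exact hx.limUnder_eq
    have h1 : ν (g ⁻¹' Set.Ioo a b) ≤ x := by
      rw [← hxval]
      exact measure_mono ((hsub1 _ isOpen_Ioo).trans
        (ultrabox_mono fun i => Set.preimage_mono Set.Ioo_subset_Ico_self))
    have h2 : x ≤ ν (g ⁻¹' Set.Icc a b) := by
      rw [← hxval]
      exact measure_mono ((ultrabox_mono fun i => Set.preimage_mono Set.Ico_subset_Icc_self).trans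
        (hsub2 _ isClosed_Icc))
    have h3 : ν (g ⁻¹' Set.Icc a b) ≤ ν (g ⁻¹' Set.Ioo a b) := by
      have hsubset : g ⁻¹' Set.Icc a b ⊆ g ⁻¹' Set.Ioo a b ∪ (g ⁻¹' {a} ∪ g ⁻¹' {b}) := by
        intro m hm
        rcases eq_or_lt_of_le (hm.1 : a ≤ g m) with h | h
        · exact Or.inr (Or.inl h.symm)
        rcases eq_or_lt_of_le (hm.2 : g m ≤ b) with h' | h'
        · exact Or.inr (Or.inr h')
        · exact Or.inl ⟨h, h'⟩
      calc ν (g ⁻¹' Set.Icc a b) ≤ ν (g ⁻¹' Set.Ioo a b ∪ (g ⁻¹' {a} ∪ g ⁻¹' {b})) :=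
            measure_mono hsubset
        _ ≤ ν (g ⁻¹' Set.Ioo a b) + ν (g ⁻¹' {a} ∪ g ⁻¹' {b}) := measure_union_le _ _
        _ ≤ ν (g ⁻¹' Set.Ioo a b) + (ν (g ⁻¹' {a}) + ν (g ⁻¹' {b})) :=
            add_le_add le_rfl (measure_union_le _ _)
        _ = ν (g ⁻¹' Set.Ioo a b) := by rw [ha, hb, add_zero, add_zero]
    have hico : ν (g ⁻¹' Set.Ico a b) = x := by
      apply le_antisymm
      · exact le_trans (le_trans (measure_mono (Set.preimage_mono Set.Ico_subset_Icc_self)) h3) h1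
      · exact le_trans (le_trans h2 h3)
          (measure_mono (Set.preimage_mono Set.Ioo_subset_Ico_self))
    have hxtop : x ≠ ∞ := by
      apply ne_of_lt
      calc x ≤ ν (g ⁻¹' Set.Icc a b) := h2
        _ ≤ ν Set.univ := measure_mono (Set.subset_univ _)
        _ ≤ 1 := hνuniv
        _ < ∞ := ENNReal.one_lt_top
    rw [hico]
    exact (ENNReal.tendsto_toReal hxtop).comp hx
  -- integrability and boundedness of the integrals
  have hnorm : ∀ i (x : M i), ‖f i x‖ ≤ β := fun i x => by
    rw [Real.norm_eq_abs]; exact hbd i x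
  have hfint : ∀ i, Integrable (f i) (μ i) := fun i =>
    ⟨(hf i).aestronglyMeasurable,
      HasFiniteIntegral.of_bounded (C := β) (Filter.Eventually.of_forall (hnorm i))⟩
  have htoReal1 : ∀ i, (μ i Set.univ).toReal ≤ 1 := fun i => by
    have := ENNReal.toReal_mono ENNReal.one_ne_top (hμ i)
    simpa using this
  have hIbd : ∀ i, |∫ x, f i x ∂μ i| ≤ β := fun i => by
    have h := norm_integral_le_of_norm_le_const (μ := μ i) (f := f i) (C := β)
      (Filter.Eventually.of_forall (hnorm i))
    rw [Real.norm_eq_abs] at h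
    calc |∫ x, f i x ∂μ i| ≤ β * (μ i Set.univ).toReal := h
      _ ≤ β * 1 := mul_le_mul_of_nonneg_left (htoReal1 i) hβ
      _ = β := mul_one β
  obtain ⟨L, _, hL⟩ := exists_ultra_lim_real 𝒟 (fun i => ∫ x, f i x ∂μ i)
    (fun i => by have := abs_le.1 (hIbd i); exact ⟨this.1, this.2⟩)
  have hgnorm : ∀ m, ‖g m‖ ≤ β := fun m => by
    rw [Real.norm_eq_abs, abs_le]; exact ⟨(hgrange m).1, (hgrange m).2⟩
  have hgint : Integrable g ν :=
    ⟨hmeas.aestronglyMeasurable,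
      HasFiniteIntegral.of_bounded (C := β) (Filter.Eventually.of_forall hgnorm)⟩
  have hνtoReal1 : (ν Set.univ).toReal ≤ 1 := by
    have := ENNReal.toReal_mono ENNReal.one_ne_top hνuniv
    simpa using this
  -- main estimate
  have main : ∀ δ : ℝ, 0 < δ → |∫ x, g x ∂ν - L| ≤ 2 * δ := by
    intro δ hδ
    -- atoms of g under ν form a countable set
    have hS : Set.Countable {t : ℝ | 0 < ν (g ⁻¹' {t})} := by
      have h := Measure.countable_meas_level_set_pos (μ := ν) (g := g) hmeas
      have heq : ∀ t : ℝ, g ⁻¹' {t} = {m | g m = t} := fun t => rfl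
      simpa [heq] using h
    have hdense : Dense {t : ℝ | 0 < ν (g ⁻¹' {t})}ᶜ := Set.Countable.dense_compl ℝ hS
    set l : ℕ → ℝ := fun k => -β - δ / 2 + k * (δ / 2) with hl
    have hpick : ∀ k : ℕ, ∃ cc : ℝ, cc ∈ Set.Ioo (l k) (l k + δ / 2) ∧ ν (g ⁻¹' {cc}) = 0 := by
      intro k
      obtain ⟨cc, hcc2, hcc1⟩ := hdense.exists_mem_open
        (isOpen_Ioo (a := l k) (b := l k + δ / 2))
        (Set.nonempty_Ioo.2 (by
          have : (0:ℝ) < δ / 2 := by linarith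
          linarith))
      refine ⟨cc, hcc1, ?_⟩
      have : ¬ 0 < ν (g ⁻¹' {cc}) := hcc2
      exact le_antisymm (not_lt.1 this) zero_le
    choose c hcIoo hc0 using hpick
    have hcIoo' : ∀ k : ℕ,
        (-β - δ / 2 + k * (δ / 2) < c k) ∧ c k < -β - δ / 2 + k * (δ / 2) + δ / 2 := by
      intro k
      have h := hcIoo k
      simp only [hl] at h
      exact ⟨h.1, h.2⟩
    have hcmono : ∀ k, c k < c (k + 1) := by
      intro k
      have a := (hcIoo' k).2
      have b := (hcIoo' (k + 1)).1
      push_cast at a b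
      linarith
    have hcmono' : StrictMono c := strictMono_nat_of_lt_succ hcmono
    have hgap : ∀ k, c (k + 1) - c k < δ := by
      intro k
      have a := (hcIoo' k).1
      have b := (hcIoo' (k + 1)).2
      push_cast at a b
      linarith
    have hc0lt : c 0 < -β := by
      have := (hcIoo' 0).2
      push_cast at this
      linarith
    obtain ⟨N, hN⟩ := exists_nat_gt ((2 * β + δ / 2) / (δ / 2))
    have hNδ : (2 * β + δ / 2) < N * (δ / 2) := by
      have h2 : (0:ℝ) < δ / 2 := by linarith
      calc (2 * β + δ / 2) = (2 * β + δ / 2) / (δ / 2) * (δ / 2) := by field_simp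
        _ < N * (δ / 2) := by
            apply mul_lt_mul_of_pos_right hN h2
    have hcN : β < c N := by
      have h1 := (hcIoo N).1
      have hlN : l N = -β - δ / 2 + N * (δ / 2) := rfl
      rw [hlN] at h1
      linarith
    -- the step function
    set σ : ℝ → ℝ :=
      fun t => ∑ k ∈ Finset.range N, (Set.Ico (c k) (c (k + 1))).indicator (fun _ => c k) t
      with hσdef
    have hcell : ∀ t ∈ Set.Icc (-β) β, ∃ k, k < N ∧ t ∈ Set.Ico (c k) (c (k + 1)) ∧ σ t = c k := by
      intro t ht
      have h0 : c 0 ≤ t := le_of_lt (lt_of_lt_of_le hc0lt ht.1)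
      have hN' : t < c N := lt_of_le_of_lt ht.2 hcN
      set k := Nat.findGreatest (fun j => c j ≤ t) N with hk
      have hkP : c k ≤ t := by
        rw [hk]; exact Nat.findGreatest_spec (P := fun j => c j ≤ t) (Nat.zero_le N) h0
      have hkN : k ≤ N := Nat.findGreatest_le N
      have hkne : k ≠ N := by
        intro h
        rw [h] at hkP
        exact absurd hkP (not_le.2 hN')
      have hklt : k < N := lt_of_le_of_ne hkN hkne
      have hnot : ¬ c (k + 1) ≤ t :=
        Nat.findGreatest_is_greatest (Nat.lt_succ_self k) (Nat.succ_le_of_lt hklt)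
      have htk : t ∈ Set.Ico (c k) (c (k + 1)) := ⟨hkP, not_le.1 hnot⟩
      refine ⟨k, hklt, htk, ?_⟩
      simp only [hσdef]
      rw [Finset.sum_eq_single_of_mem k (Finset.mem_range.2 hklt)]
      · exact Set.indicator_of_mem htk _
      · intro j hj hne
        apply Set.indicator_of_notMem
        intro htj
        rcases hne.lt_or_gt with hlt | hlt
        · have : c (j + 1) ≤ c k := hcmono'.monotone (Nat.succ_le_of_lt hlt)
          exact absurd htj.2 (not_lt.2 (le_trans this hkP))
        · have : c (k + 1) ≤ c j := hcmono'.monotone (Nat.succ_le_of_lt hlt)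
          exact absurd htj.1 (not_le.2 (lt_of_lt_of_le htk.2 this))
    have hσ_near : ∀ t ∈ Set.Icc (-β) β, |σ t - t| ≤ δ := by
      intro t ht
      obtain ⟨k, _, ⟨hk1, hk2⟩, hσt⟩ := hcell t ht
      rw [hσt, abs_sub_comm, abs_of_nonneg (by linarith)]
      have := hgap k
      linarith
    set B : ℝ := ∑ k ∈ Finset.range N, |c k| with hB
    have hσ_bd : ∀ t, |σ t| ≤ B := by
      intro t
      refine (Finset.abs_sum_le_sum_abs _ _).trans (Finset.sum_le_sum fun k _ => ?_)
      by_cases h : t ∈ Set.Ico (c k) (c (k + 1))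
      · rw [Set.indicator_of_mem h]
      · rw [Set.indicator_of_notMem h, abs_zero]; exact abs_nonneg _
    have hσ_meas : Measurable σ :=
      Finset.measurable_sum _ fun k _ => measurable_const.indicator measurableSet_Ico
    -- integral of σ ∘ f i
    have hcompF : ∀ i, ∫ x, σ (f i x) ∂μ i =
        ∑ k ∈ Finset.range N, c k * (μ i (f i ⁻¹' Set.Ico (c k) (c (k + 1)))).toReal := by
      intro i
      have heq : (fun x => σ (f i x)) = fun x =>
          ∑ k ∈ Finset.range N,
            (f i ⁻¹' Set.Ico (c k) (c (k + 1))).indicator (fun _ => c k) x := by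
        funext x
        simp only [hσdef]
        refine Finset.sum_congr rfl fun k _ => ?_
        by_cases hx : f i x ∈ Set.Ico (c k) (c (k + 1)) <;>
          simp [Set.indicator_apply, hx]
      rw [heq, integral_finset_sum _ fun k _ =>
        (integrable_const (c k)).indicator ((hf i) measurableSet_Ico)]
      refine Finset.sum_congr rfl fun k _ => ?_
      rw [integral_indicator_const (c k) ((hf i) measurableSet_Ico), smul_eq_mul, mul_comm]; rfl
    have hcompG : ∫ x, σ (g x) ∂ν =
        ∑ k ∈ Finset.range N, c k * (ν (g ⁻¹' Set.Ico (c k) (c (k + 1)))).toReal := by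
      have heq : (fun m => σ (g m)) = fun m =>
          ∑ k ∈ Finset.range N,
            (g ⁻¹' Set.Ico (c k) (c (k + 1))).indicator (fun _ => c k) m := by
        funext m
        simp only [hσdef]
        refine Finset.sum_congr rfl fun k _ => ?_
        by_cases hx : g m ∈ Set.Ico (c k) (c (k + 1)) <;>
          simp [Set.indicator_apply, hx]
      rw [heq, integral_finset_sum _ fun k _ =>
        (integrable_const (c k)).indicator (hmeas measurableSet_Ico)]
      refine Finset.sum_congr rfl fun k _ => ?_
      rw [integral_indicator_const (c k) (hmeas measurableSet_Ico), smul_eq_mul, mul_comm]; rfl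
    -- convergence of the sums
    have hsum : Tendsto (fun i => ∫ x, σ (f i x) ∂μ i) (𝒟 : Filter I)
        (𝓝 (∫ x, σ (g x) ∂ν)) := by
      have hF : (fun i => ∫ x, σ (f i x) ∂μ i) = fun i =>
          ∑ k ∈ Finset.range N, c k * (μ i (f i ⁻¹' Set.Ico (c k) (c (k + 1)))).toReal :=
        funext hcompF
      rw [hF, hcompG]
      exact tendsto_finset_sum _ fun k _ =>
        (key (c k) (c (k + 1)) (hc0 k) (hc0 (k + 1))).const_mul (c k)
    -- integral differences
    have hσfint : ∀ i, Integrable (fun x => σ (f i x)) (μ i) := fun i =>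
      ⟨(hσ_meas.comp (hf i)).aestronglyMeasurable,
        HasFiniteIntegral.of_bounded (C := B) (Filter.Eventually.of_forall fun x => by
          rw [Real.norm_eq_abs]; exact hσ_bd _)⟩
    have hσgint : Integrable (fun m => σ (g m)) ν :=
      ⟨(hσ_meas.comp hmeas).aestronglyMeasurable,
        HasFiniteIntegral.of_bounded (C := B) (Filter.Eventually.of_forall fun m => by
          rw [Real.norm_eq_abs]; exact hσ_bd _)⟩
    have hdiffF : ∀ i, |∫ x, f i x ∂μ i - ∫ x, σ (f i x) ∂μ i| ≤ δ := by
      intro i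
      rw [← integral_sub (hfint i) (hσfint i)]
      have h := norm_integral_le_of_norm_le_const (μ := μ i)
        (f := fun x => f i x - σ (f i x)) (C := δ)
        (Filter.Eventually.of_forall fun x => by
          rw [Real.norm_eq_abs, abs_sub_comm]
          exact hσ_near (f i x) (Set.mem_Icc.2 (abs_le.1 (hbd i x))))
      rw [Real.norm_eq_abs] at h
      calc |∫ x, (f i x - σ (f i x)) ∂μ i| ≤ δ * (μ i Set.univ).toReal := h
        _ ≤ δ * 1 := mul_le_mul_of_nonneg_left (htoReal1 i) (le_of_lt hδ)
        _ = δ := mul_one δ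
    have hdiffG : |∫ x, g x ∂ν - ∫ x, σ (g x) ∂ν| ≤ δ := by
      rw [← integral_sub hgint hσgint]
      have h := norm_integral_le_of_norm_le_const (μ := ν)
        (f := fun m => g m - σ (g m)) (C := δ)
        (Filter.Eventually.of_forall fun m => by
          rw [Real.norm_eq_abs, abs_sub_comm]
          exact hσ_near (g m) (hgrange m))
      rw [Real.norm_eq_abs] at h
      calc |∫ x, (g x - σ (g x)) ∂ν| ≤ δ * (ν Set.univ).toReal := h
        _ ≤ δ * 1 := mul_le_mul_of_nonneg_left hνtoReal1 (le_of_lt hδ)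
        _ = δ := mul_one δ
    have h5 : |L - ∫ x, σ (g x) ∂ν| ≤ δ := by
      have htd : Tendsto (fun i => ∫ x, f i x ∂μ i - ∫ x, σ (f i x) ∂μ i) (𝒟 : Filter I)
          (𝓝 (L - ∫ x, σ (g x) ∂ν)) := hL.sub hsum
      exact le_of_tendsto htd.abs (Filter.Eventually.of_forall hdiffF)
    have htri := abs_sub_le (∫ x, g x ∂ν) (∫ x, σ (g x) ∂ν) L
    rw [abs_sub_comm (∫ x, σ (g x) ∂ν) L] at htri
    linarith
  have hEq : ∫ x, g x ∂ν = L := by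
    by_contra hne
    have habs : 0 < |∫ x, g x ∂ν - L| := abs_pos.2 (sub_ne_zero.2 hne)
    have := main (|∫ x, g x ∂ν - L| / 4) (by linarith)
    linarith
  exact ⟨g, htend, hmeas, by rw [hEq]; exact hL⟩
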